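/- arXiv:2006.11617 — 2 statements merged into one kernel-verified Lean document; each statement's English description precedes it below -/
import Mathlib

section
/- (Extension lemma.) Suppose Ω : S^{d−1} → G(ℓ,k) and B : S^{d−1} → (ℂ^ℓ)^* are Hölder continuous, and B satisfies the weak cancellation condition ∫_{S^{d−1}} B(ζ)[v] J(ζ) dσ(ζ) = 0 for every v ∈ V := ⋂_{ζ∈S^{d−1}} Ω(ζ). Then there exists a Hölder continuous B̃ : S^{d−1} → (ℂ^ℓ)^* such that B̃(ζ)[v] = B(ζ)[v] for every ζ ∈ S^{d−1} and every v ∈ Ω(ζ), and which satisfies the full cancellation condition ∫_{S^{d−1}} B̃(ζ)[v] J(ζ) dσ(ζ) = 0 for every v ∈ ℂ^ℓ. -/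
open MeasureTheory Metric
open scoped ENNReal

/-- `J(ζ) = ∑ a_j ζ_j²`. -/
def aJ {d : ℕ} (a : Fin d → ℝ) (ζ : EuclideanSpace ℝ (Fin d)) : ℝ :=
  ∑ j, a j * (ζ j) ^ 2

/-- The orthogonal projection of `ℂ^ℓ` onto a subspace, as an endomorphism of `ℂ^ℓ`. -/
noncomputable def sphProj {ℓ : ℕ} (L : Submodule ℂ (EuclideanSpace ℂ (Fin ℓ))) :
    EuclideanSpace ℂ (Fin ℓ) →L[ℂ] EuclideanSpace ℂ (Fin ℓ) :=
  L.subtypeL.comp (L.orthogonalProjectionOnto)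

section Aux
open Set
open scoped Pointwise

lemma holder_cont {X Y : Type*} [MetricSpace X] [NormedAddCommGroup Y]
    {s : Set X} {f : X → Y} {C α : ℝ} (hα : 0 < α)
    (h : ∀ x ∈ s, ∀ y ∈ s, dist x y ≤ 1 → ‖f x - f y‖ ≤ C * dist x y ^ α) :
    ContinuousOn f s := by
  intro x hx
  rw [ContinuousWithinAt, tendsto_iff_dist_tendsto_zero]
  have hb : Filter.Tendsto (fun y => C * dist y x ^ α) (nhdsWithin x s) (nhds 0) := by
    have h1 : Filter.Tendsto (fun y : X => dist y x) (nhdsWithin x s) (nhds 0) := by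
      have := (continuous_id.dist (continuous_const : Continuous fun _ : X => x)).tendsto x
      simpa using this.mono_left nhdsWithin_le_nhds
    have h2 : Filter.Tendsto (fun t : ℝ => C * t ^ α) (nhds 0) (nhds 0) := by
      have hc : ContinuousAt (fun t : ℝ => C * t ^ α) 0 :=
        continuousAt_const.mul (Real.continuousAt_rpow_const 0 α (Or.inr hα.le))
      have : (fun t : ℝ => C * t ^ α) 0 = 0 := by
        simp [Real.zero_rpow hα.ne']
      simpa [this] using hc.tendsto
    exact h2.comp h1
  refine squeeze_zero' ?_ ?_ hb
  · exact Filter.Eventually.of_forall fun y => dist_nonneg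
  · filter_upwards [self_mem_nhdsWithin,
      nhdsWithin_le_nhds (Metric.closedBall_mem_nhds x one_pos)] with y hy hy1
    rw [dist_eq_norm]
    exact h y hy x hx (by simpa [dist_comm] using hy1)

lemma toSphere_open_pos {d : ℕ} (hd : 1 ≤ d)
    {s : Set (sphere (0 : EuclideanSpace ℝ (Fin d)) 1)} (hso : IsOpen s) (hne : s.Nonempty) :
    0 < (volume : Measure (EuclideanSpace ℝ (Fin d))).toSphere s := by
  set E := EuclideanSpace ℝ (Fin d) with hE
  rw [Measure.toSphere_apply' _ hso.measurableSet]
  obtain ⟨V, hVo, hVs⟩ := isOpen_induced_iff.mp hso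
  set W : Set E := {x : E | x ≠ 0 ∧ ‖x‖ < 1 ∧ ‖x‖⁻¹ • x ∈ V} with hW
  have hWo : IsOpen W := by
    have hO : IsOpen ({x : E | x ≠ 0} ∩ ball 0 1) :=
      (isOpen_compl_singleton).inter isOpen_ball
    have hcont : ContinuousOn (fun x : E => ‖x‖⁻¹ • x) ({x : E | x ≠ 0} ∩ ball 0 1) := by
      exact ((continuous_norm.continuousOn).inv₀
        (fun x hx => norm_ne_zero_iff.2 hx.1)).smul continuous_id.continuousOn
    have := hcont.isOpen_inter_preimage hO hVo
    convert this using 1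
    ext x
    simp only [hW, mem_setOf_eq, mem_inter_iff, mem_preimage, mem_ball_zero_iff]
    tauto
  have hkey : Ioo (0:ℝ) 1 • ((↑) '' s) = W := by
    ext x
    constructor
    · rintro ⟨r, hr, y, hy, rfl⟩
      obtain ⟨z, hz, rfl⟩ := hy
      have hz1 : ‖(z : E)‖ = 1 := mem_sphere_zero_iff_norm.mp z.2
      have hzne : (z : E) ≠ 0 := by
        intro h0; rw [h0] at hz1; simp at hz1
      have hrn : ‖r • (z : E)‖ = r := by
        rw [norm_smul, hz1, Real.norm_eq_abs, abs_of_pos hr.1, mul_one]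
      refine ⟨by simp [smul_eq_zero, hr.1.ne', hzne], by rw [hrn]; exact hr.2, ?_⟩
      rw [hrn, inv_smul_smul₀ hr.1.ne']
      rw [← hVs] at hz; exact hz
    · rintro ⟨hx0, hx1, hxV⟩
      have hxn : (0:ℝ) < ‖x‖ := norm_pos_iff.2 hx0
      have hy1 : ‖(‖x‖⁻¹ • x : E)‖ = 1 := by
        rw [norm_smul, Real.norm_eq_abs, abs_of_pos (inv_pos.2 hxn), inv_mul_cancel₀ hxn.ne']
      refine ⟨‖x‖, ⟨hxn, hx1⟩, ‖x‖⁻¹ • x, ⟨⟨‖x‖⁻¹ • x, mem_sphere_zero_iff_norm.mpr hy1⟩, ?_, rfl⟩,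
        smul_inv_smul₀ hxn.ne' x⟩
      rw [← hVs]; exact hxV
  rw [hkey]
  obtain ⟨z₀, hz₀⟩ := hne
  have hz₀W : ((1:ℝ)/2) • (z₀ : E) ∈ W := by
    rw [← hkey]
    exact Set.smul_mem_smul (by norm_num) ⟨z₀, hz₀, rfl⟩
  have hpos : 0 < volume W := hWo.measure_pos volume ⟨_, hz₀W⟩
  have hd0 : (Module.finrank ℝ E : ℝ≥0∞) ≠ 0 := by
    have : Module.finrank ℝ E = d := finrank_euclideanSpace_fin
    simp [this]; omega
  exact ENNReal.mul_pos hd0 hpos.ne'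

lemma factor_through {K M N : Type*} [Field K] [AddCommGroup M] [Module K M]
    [AddCommGroup N] [Module K N]
    (Q : M →ₗ[K] M) (T : M →ₗ[K] N) (h : LinearMap.ker Q ≤ LinearMap.ker T) :
    ∃ S : M →ₗ[K] N, S.comp Q = T := by
  set e := Q.quotKerEquivRange
  set T' := (LinearMap.ker Q).liftQ T h
  obtain ⟨S, hS⟩ := LinearMap.exists_extend (T'.comp e.symm.toLinearMap)
  refine ⟨S, ?_⟩
  ext x
  have h1 : (LinearMap.range Q).subtype ⟨Q x, LinearMap.mem_range_self Q x⟩ = Q x := rfl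
  have h2 : e.symm ⟨Q x, LinearMap.mem_range_self Q x⟩ = Submodule.Quotient.mk x := by
    rw [LinearEquiv.symm_apply_eq]
    exact Subtype.ext (Q.quotKerEquivRange_apply_mk x)
  calc S (Q x) = S ((LinearMap.range Q).subtype ⟨Q x, LinearMap.mem_range_self Q x⟩) := by rw [h1]
    _ = (T'.comp e.symm.toLinearMap) ⟨Q x, LinearMap.mem_range_self Q x⟩ := by
        rw [← hS]; rfl
    _ = T' (Submodule.Quotient.mk x) := by simp [LinearMap.comp_apply, h2]
    _ = T x := rfl

lemma sphere_integrable {d : ℕ} {Y : Type*} [NormedAddCommGroup Y]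
    {f : sphere (0 : EuclideanSpace ℝ (Fin d)) 1 → Y} (hf : Continuous f) :
    Integrable f (volume : Measure (EuclideanSpace ℝ (Fin d))).toSphere :=
  hf.integrable_of_hasCompactSupport (HasCompactSupport.of_compactSpace f)

lemma sphProj_norm_le {ℓ : ℕ} (L : Submodule ℂ (EuclideanSpace ℂ (Fin ℓ))) : ‖sphProj L‖ ≤ 1 := by
  refine ContinuousLinearMap.opNorm_le_bound _ zero_le_one fun v => ?_
  have h1 : sphProj L v = (Submodule.orthogonalProjectionOnto L v : EuclideanSpace ℂ (Fin ℓ)) := rfl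
  rw [h1, one_mul]
  calc ‖(Submodule.orthogonalProjectionOnto L v : EuclideanSpace ℂ (Fin ℓ))‖
      = ‖Submodule.orthogonalProjectionOnto L v‖ := rfl
    _ ≤ ‖Submodule.orthogonalProjectionOnto L‖ * ‖v‖ := (Submodule.orthogonalProjectionOnto L).le_opNorm v
    _ ≤ 1 * ‖v‖ :=
        mul_le_mul_of_nonneg_right (Submodule.orthogonalProjectionOnto_norm_le (K := L)) (norm_nonneg v)
    _ = ‖v‖ := one_mul _

lemma aJ_cont {d : ℕ} (a : Fin d → ℝ) : Continuous fun ζ : EuclideanSpace ℝ (Fin d) => aJ a ζ := by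
  unfold aJ
  exact continuous_finset_sum _ fun j _ =>
    continuous_const.mul (((EuclideanSpace.proj j).continuous).pow 2)

end Aux

set_option maxHeartbeats 2000000 in
/-- (Extension lemma.) If `B` is a Hölder continuous field of linear
functionals satisfying the weak cancellation condition with respect to `Ω`, then it admits
a Hölder continuous extension `B̃` to functionals on all of `ℂ^ℓ` satisfying the full
cancellation condition `∫_{S^{d-1}} B̃(ζ)[v] J(ζ) dσ(ζ) = 0` for every `v ∈ ℂ^ℓ`. -/
theorem statement5 (d ℓ k : ℕ) (hd : 2 ≤ d) (hk1 : 1 ≤ k) (hkl : k ≤ ℓ)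
    (a : Fin d → ℝ) (hapos : ∀ j, 0 < a j) (hasum : ∑ j, a j = d)
    (Ω : EuclideanSpace ℝ (Fin d) → Submodule ℂ (EuclideanSpace ℂ (Fin ℓ)))
    (hrank : ∀ ζ ∈ sphere (0 : EuclideanSpace ℝ (Fin d)) 1, Module.finrank ℂ (Ω ζ) = k)
    (hΩHolder : ∃ C α : ℝ, 0 < α ∧ ∀ ζ₁ ∈ sphere (0 : EuclideanSpace ℝ (Fin d)) 1,
      ∀ ζ₂ ∈ sphere (0 : EuclideanSpace ℝ (Fin d)) 1, dist ζ₁ ζ₂ ≤ 1 →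
        ‖sphProj (Ω ζ₁) - sphProj (Ω ζ₂)‖ ≤ C * dist ζ₁ ζ₂ ^ α)
    (B : EuclideanSpace ℝ (Fin d) → (EuclideanSpace ℂ (Fin ℓ) →L[ℂ] ℂ))
    (hBHolder : ∃ C α : ℝ, 0 < α ∧ ∀ ζ₁ ∈ sphere (0 : EuclideanSpace ℝ (Fin d)) 1,
      ∀ ζ₂ ∈ sphere (0 : EuclideanSpace ℝ (Fin d)) 1, dist ζ₁ ζ₂ ≤ 1 →
        ‖B ζ₁ - B ζ₂‖ ≤ C * dist ζ₁ ζ₂ ^ α)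
    (hweak : ∀ v : EuclideanSpace ℂ (Fin ℓ),
      (∀ ζ ∈ sphere (0 : EuclideanSpace ℝ (Fin d)) 1, v ∈ Ω ζ) →
      ∫ ζ : sphere (0 : EuclideanSpace ℝ (Fin d)) 1,
          B (ζ : EuclideanSpace ℝ (Fin d)) v * ((aJ a (ζ : EuclideanSpace ℝ (Fin d)) : ℝ) : ℂ)
        ∂(volume : Measure (EuclideanSpace ℝ (Fin d))).toSphere = 0) :
    ∃ Btilde : EuclideanSpace ℝ (Fin d) → (EuclideanSpace ℂ (Fin ℓ) →L[ℂ] ℂ),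
      (∃ C α : ℝ, 0 < α ∧ ∀ ζ₁ ∈ sphere (0 : EuclideanSpace ℝ (Fin d)) 1,
        ∀ ζ₂ ∈ sphere (0 : EuclideanSpace ℝ (Fin d)) 1, dist ζ₁ ζ₂ ≤ 1 →
          ‖Btilde ζ₁ - Btilde ζ₂‖ ≤ C * dist ζ₁ ζ₂ ^ α) ∧
      (∀ ζ ∈ sphere (0 : EuclideanSpace ℝ (Fin d)) 1,
        ∀ v ∈ Ω ζ, Btilde ζ v = B ζ v) ∧
      (∀ v : EuclideanSpace ℂ (Fin ℓ),
        ∫ ζ : sphere (0 : EuclideanSpace ℝ (Fin d)) 1,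
            Btilde (ζ : EuclideanSpace ℝ (Fin d)) v *
              ((aJ a (ζ : EuclideanSpace ℝ (Fin d)) : ℝ) : ℂ)
          ∂(volume : Measure (EuclideanSpace ℝ (Fin d))).toSphere = 0) := by
  classical
  obtain ⟨CB, αB, hαB, hB⟩ := hBHolder
  obtain ⟨CΩ, αΩ, hαΩ, hΩ⟩ := hΩHolder
  set Sp := sphere (0 : EuclideanSpace ℝ (Fin d)) 1 with hSp
  set ν := (volume : Measure (EuclideanSpace ℝ (Fin d))).toSphere with hν
  haveI : Nontrivial (EuclideanSpace ℝ (Fin d)) := by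
    refine ⟨⟨EuclideanSpace.single ⟨0, by omega⟩ (1:ℝ), 0, fun h => ?_⟩⟩
    have := congr_arg (fun x => x ⟨0, by omega⟩) h
    simp only [EuclideanSpace.single_apply, if_pos rfl] at this
    exact one_ne_zero this
  haveI hSpNe : Nonempty Sp := (NormedSpace.sphere_nonempty.mpr zero_le_one).to_subtype
  -- continuity facts
  have hπc : Continuous fun ζ : Sp => sphProj (Ω ζ) :=
    (holder_cont hαΩ hΩ).comp_continuous continuous_subtype_val fun ζ => ζ.2
  have hBc : Continuous fun ζ : Sp => B ζ :=
    (holder_cont hαB hB).comp_continuous continuous_subtype_val fun ζ => ζ.2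
  have hJc : Continuous fun ζ : Sp => ((aJ a (ζ : (EuclideanSpace ℝ (Fin d))) : ℝ) : ℂ) :=
    Complex.continuous_ofReal.comp ((aJ_cont a).comp continuous_subtype_val)
  have hJcR : Continuous fun ζ : Sp => aJ a (ζ : (EuclideanSpace ℝ (Fin d))) :=
    (aJ_cont a).comp continuous_subtype_val
  -- integrands
  have hTint : ∀ v : EuclideanSpace ℂ (Fin ℓ), Integrable
      (fun ζ : Sp => B (ζ : (EuclideanSpace ℝ (Fin d))) (sphProj (Ω ζ) v) * ((aJ a (ζ : (EuclideanSpace ℝ (Fin d))) : ℝ) : ℂ)) ν := by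
    intro v
    exact sphere_integrable ((hBc.clm_apply (hπc.clm_apply continuous_const)).mul hJc)
  have hQint : ∀ v : EuclideanSpace ℂ (Fin ℓ), Integrable
      (fun ζ : Sp => ((aJ a (ζ : (EuclideanSpace ℝ (Fin d))) : ℝ) : ℂ) • (v - sphProj (Ω ζ) v)) ν := by
    intro v
    exact sphere_integrable (hJc.smul (continuous_const.sub (hπc.clm_apply continuous_const)))
  -- the maps T and Q
  set Tmap : EuclideanSpace ℂ (Fin ℓ) →ₗ[ℂ] ℂ :=
    { toFun := fun v => ∫ ζ : Sp, B (ζ : (EuclideanSpace ℝ (Fin d))) (sphProj (Ω ζ) v) * ((aJ a (ζ : (EuclideanSpace ℝ (Fin d))) : ℝ) : ℂ) ∂ν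
      map_add' := by
        intro v w
        rw [← integral_add (hTint v) (hTint w)]
        exact integral_congr_ae (.of_forall fun ζ => by simp only [map_add, add_mul])
      map_smul' := by
        intro c v
        simp only [RingHom.id_apply, smul_eq_mul]
        rw [← integral_const_mul]
        exact integral_congr_ae (.of_forall fun ζ => by
          simp only [_root_.map_smul, smul_eq_mul]; ring) } with hTmap
  set Qmap : EuclideanSpace ℂ (Fin ℓ) →ₗ[ℂ] EuclideanSpace ℂ (Fin ℓ) :=
    { toFun := fun v => ∫ ζ : Sp, ((aJ a (ζ : (EuclideanSpace ℝ (Fin d))) : ℝ) : ℂ) • (v - sphProj (Ω ζ) v) ∂ν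
      map_add' := by
        intro v w
        rw [← integral_add (hQint v) (hQint w)]
        exact integral_congr_ae (.of_forall fun ζ => by
          simp only [map_add, add_sub_add_comm, smul_add])
      map_smul' := by
        intro c v
        simp only [RingHom.id_apply]
        rw [← integral_smul]
        exact integral_congr_ae (.of_forall fun ζ => by
          simp only [_root_.map_smul, ← smul_sub]; rw [smul_comm]) } with hQmap
  -- kernel of Q is contained in kernel of T
  have hJpos : ∀ ζ : Sp, 0 < aJ a (ζ : (EuclideanSpace ℝ (Fin d))) := by
    intro ζ
    have hnn : ∀ j ∈ Finset.univ, 0 ≤ a j * ((ζ : (EuclideanSpace ℝ (Fin d))) j) ^ 2 :=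
      fun j _ => mul_nonneg (hapos j).le (sq_nonneg _)
    rcases lt_or_eq_of_le (Finset.sum_nonneg hnn) with h | h
    · exact h
    · exfalso
      have hz : ∀ j, (ζ : (EuclideanSpace ℝ (Fin d))) j = 0 := by
        intro j
        have := (Finset.sum_eq_zero_iff_of_nonneg hnn).mp h.symm j (Finset.mem_univ j)
        have h2 : ((ζ : (EuclideanSpace ℝ (Fin d))) j) ^ 2 = 0 := by
          rcases mul_eq_zero.mp this with h' | h'
          · exact absurd h' (hapos j).ne'
          · exact h'
        exact pow_eq_zero_iff (by norm_num) |>.mp h2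
      have hζ0 : (ζ : (EuclideanSpace ℝ (Fin d))) = 0 := PiLp.ext hz
      have := mem_sphere_zero_iff_norm.mp ζ.2
      rw [hζ0] at this; simp at this
  have hker : LinearMap.ker Qmap ≤ LinearMap.ker Tmap := by
    intro v hv
    rw [LinearMap.mem_ker] at hv ⊢
    -- inner product with v
    have hinner : (∫ ζ : Sp, ((aJ a (ζ : (EuclideanSpace ℝ (Fin d))) * ‖v - sphProj (Ω ζ) v‖ ^ 2 : ℝ) : ℂ) ∂ν) = 0 := by
      have h1 := integral_inner (𝕜 := ℂ) (hQint v) v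
      have h2 : (inner ℂ v (Qmap v) : ℂ) = 0 := by rw [hv, inner_zero_right]
      have h3 : (inner ℂ v (Qmap v) : ℂ)
          = ∫ ζ : Sp, (inner ℂ v (((aJ a (ζ : (EuclideanSpace ℝ (Fin d))) : ℝ) : ℂ) • (v - sphProj (Ω ζ) v)) : ℂ) ∂ν := h1.symm
      rw [h3] at h2
      rw [← h2]
      refine integral_congr_ae (.of_forall fun ζ => ?_)
      beta_reduce
      set w := v - sphProj (Ω ζ) v with hw
      have hmem : w ∈ (Ω ζ)ᗮ := Submodule.sub_starProjection_mem_orthogonal (K := Ω ζ) v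
      have hπmem : sphProj (Ω ζ) v ∈ Ω ζ := (Submodule.orthogonalProjectionOnto (Ω ζ) v).2
      have h0 : (inner ℂ (sphProj (Ω ζ) v) w : ℂ) =
          0 := (Submodule.mem_orthogonal _ _).mp hmem _ hπmem
      have hvw : (inner ℂ v w : ℂ) = ((‖w‖ ^ 2 : ℝ) : ℂ) := by
        have hdecomp : v = sphProj (Ω ζ) v + w := by rw [hw]; abel
        conv_lhs => rw [hdecomp]
        rw [inner_add_left, h0, zero_add, inner_self_eq_norm_sq_to_K]
        norm_cast
      rw [inner_smul_right, hvw]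
      push_cast
      ring
    set g : Sp → ℝ := fun ζ => aJ a (ζ : (EuclideanSpace ℝ (Fin d))) * ‖v - sphProj (Ω ζ) v‖ ^ 2 with hg
    have hgc : Continuous g :=
      hJcR.mul ((continuous_const.sub (hπc.clm_apply continuous_const)).norm.pow 2)
    have hgint : Integrable g ν := sphere_integrable hgc
    have hgnn : 0 ≤ g := fun ζ => mul_nonneg (hJpos ζ).le (sq_nonneg _)
    have hg0 : ∫ ζ, g ζ ∂ν = 0 := by
      have h4 : ((∫ ζ, g ζ ∂ν : ℝ) : ℂ) = 0 := by
        have h5 : ((∫ ζ, g ζ ∂ν : ℝ) : ℂ) = ∫ ζ : Sp, ((g ζ : ℝ) : ℂ) ∂ν :=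
          (integral_ofReal (𝕜 := ℂ)).symm
        rw [h5]
        exact hinner
      exact_mod_cast h4
    have hgzero : ∀ ζ : Sp, g ζ = 0 := by
      by_contra hcon
      push_neg at hcon
      obtain ⟨ζ₀, hζ₀⟩ := hcon
      have hopen : IsOpen (Function.support g) := by
        rw [Function.support_eq_preimage]
        exact (isOpen_compl_singleton).preimage hgc
      have hpos := toSphere_open_pos (by omega) hopen ⟨ζ₀, hζ₀⟩
      have := (integral_pos_iff_support_of_nonneg hgnn hgint).mpr hpos
      rw [hg0] at this
      exact lt_irrefl 0 this
    have hvΩ : ∀ ζ : Sp, sphProj (Ω ζ) v = v := by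
      intro ζ
      have hthis : aJ a (ζ : EuclideanSpace ℝ (Fin d)) * ‖v - sphProj (Ω ζ) v‖ ^ 2 = 0 :=
        hgzero ζ
      have h2 : ‖v - sphProj (Ω ζ) v‖ ^ 2 = 0 := by
        rcases mul_eq_zero.mp hthis with h' | h'
        · exact absurd h' (hJpos ζ).ne'
        · exact h'
      have := pow_eq_zero_iff (two_ne_zero) |>.mp h2
      rw [norm_eq_zero, sub_eq_zero] at this
      exact this.symm
    have hvmem : ∀ ζ ∈ Sp, v ∈ Ω ζ := by
      intro ζ hζ
      have := hvΩ ⟨ζ, hζ⟩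
      rw [← this]
      exact (Submodule.orthogonalProjectionOnto (Ω ζ) v).2
    have : Tmap v = ∫ ζ : Sp, B (ζ : (EuclideanSpace ℝ (Fin d))) v * ((aJ a (ζ : (EuclideanSpace ℝ (Fin d))) : ℝ) : ℂ) ∂ν := by
      rw [hTmap]
      refine integral_congr_ae (.of_forall fun ζ => ?_)
      beta_reduce
      rw [hvΩ ζ]
    rw [this]
    exact hweak v hvmem
  obtain ⟨S₀, hS₀⟩ := factor_through Qmap Tmap hker
  set S₀c := LinearMap.toContinuousLinearMap S₀ with hS₀c
  set Btilde : EuclideanSpace ℝ (Fin d) → (EuclideanSpace ℂ (Fin ℓ) →L[ℂ] ℂ) := fun ζ =>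
    (B ζ).comp (sphProj (Ω ζ)) +
      S₀c.comp (sphProj (Ω ζ) - ContinuousLinearMap.id ℂ (EuclideanSpace ℂ (Fin ℓ))) with hBt
  refine ⟨Btilde, ?_, ?_, ?_⟩
  · -- Hölder continuity
    obtain ⟨ζM, hζM⟩ := (hBc.norm).exists_forall_ge
      (by rw [Filter.cocompact_eq_bot]; exact Filter.tendsto_bot)
    set M := ‖B ((ζM : EuclideanSpace ℝ (Fin d)))‖ with hM
    have hMnn : 0 ≤ M := norm_nonneg _
    have hMb : ∀ ζ ∈ Sp, ‖B ζ‖ ≤ M := fun ζ hζ => hζM ⟨ζ, hζ⟩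
    have hα0 : 0 < min αB αΩ := lt_min hαB hαΩ
    refine ⟨max CB 0 + (M + ‖S₀c‖) * max CΩ 0, min αB αΩ, hα0, ?_⟩
    intro ζ₁ hζ₁ ζ₂ hζ₂ hdist
    have hr0 : 0 ≤ dist ζ₁ ζ₂ := dist_nonneg
    have hpow : ∀ β : ℝ, min αB αΩ ≤ β → 0 < β →
        dist ζ₁ ζ₂ ^ β ≤ dist ζ₁ ζ₂ ^ (min αB αΩ) := by
      intro β hβ hβ0
      rcases eq_or_lt_of_le hr0 with h0 | h0
      · rw [← h0, Real.zero_rpow hβ0.ne', Real.zero_rpow hα0.ne']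
      · exact Real.rpow_le_rpow_of_exponent_ge h0 hdist hβ
    have hπ12 : ‖sphProj (Ω ζ₁) - sphProj (Ω ζ₂)‖ ≤ max CΩ 0 * dist ζ₁ ζ₂ ^ (min αB αΩ) := by
      calc ‖sphProj (Ω ζ₁) - sphProj (Ω ζ₂)‖ ≤ CΩ * dist ζ₁ ζ₂ ^ αΩ := hΩ ζ₁ hζ₁ ζ₂ hζ₂ hdist
        _ ≤ max CΩ 0 * dist ζ₁ ζ₂ ^ αΩ :=
            mul_le_mul_of_nonneg_right (le_max_left _ _) (Real.rpow_nonneg hr0 _)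
        _ ≤ max CΩ 0 * dist ζ₁ ζ₂ ^ (min αB αΩ) :=
            mul_le_mul_of_nonneg_left (hpow αΩ (min_le_right _ _) hαΩ) (le_max_right _ _)
    have hB12 : ‖B ζ₁ - B ζ₂‖ ≤ max CB 0 * dist ζ₁ ζ₂ ^ (min αB αΩ) := by
      calc ‖B ζ₁ - B ζ₂‖ ≤ CB * dist ζ₁ ζ₂ ^ αB := hB ζ₁ hζ₁ ζ₂ hζ₂ hdist
        _ ≤ max CB 0 * dist ζ₁ ζ₂ ^ αB :=
            mul_le_mul_of_nonneg_right (le_max_left _ _) (Real.rpow_nonneg hr0 _)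
        _ ≤ max CB 0 * dist ζ₁ ζ₂ ^ (min αB αΩ) :=
            mul_le_mul_of_nonneg_left (hpow αB (min_le_left _ _) hαB) (le_max_right _ _)
    have hdecomp : Btilde ζ₁ - Btilde ζ₂
        = ((B ζ₁ - B ζ₂).comp (sphProj (Ω ζ₁))
            + (B ζ₂).comp (sphProj (Ω ζ₁) - sphProj (Ω ζ₂)))
          + S₀c.comp (sphProj (Ω ζ₁) - sphProj (Ω ζ₂)) := by
      rw [hBt]
      ext v
      simp only [ContinuousLinearMap.sub_apply, ContinuousLinearMap.add_apply,
        ContinuousLinearMap.comp_apply, ContinuousLinearMap.id_apply, map_sub]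
      ring
    have h1 : ‖(B ζ₁ - B ζ₂).comp (sphProj (Ω ζ₁))‖
        ≤ max CB 0 * dist ζ₁ ζ₂ ^ (min αB αΩ) := by
      calc ‖(B ζ₁ - B ζ₂).comp (sphProj (Ω ζ₁))‖
          ≤ ‖B ζ₁ - B ζ₂‖ * ‖sphProj (Ω ζ₁)‖ := ContinuousLinearMap.opNorm_comp_le _ _
        _ ≤ (max CB 0 * dist ζ₁ ζ₂ ^ (min αB αΩ)) * 1 :=
            mul_le_mul hB12 (sphProj_norm_le _) (norm_nonneg _) (by positivity)
        _ = max CB 0 * dist ζ₁ ζ₂ ^ (min αB αΩ) := mul_one _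
    have h2 : ‖(B ζ₂).comp (sphProj (Ω ζ₁) - sphProj (Ω ζ₂))‖
        ≤ M * (max CΩ 0 * dist ζ₁ ζ₂ ^ (min αB αΩ)) := by
      calc ‖(B ζ₂).comp (sphProj (Ω ζ₁) - sphProj (Ω ζ₂))‖
          ≤ ‖B ζ₂‖ * ‖sphProj (Ω ζ₁) - sphProj (Ω ζ₂)‖ := ContinuousLinearMap.opNorm_comp_le _ _
        _ ≤ M * (max CΩ 0 * dist ζ₁ ζ₂ ^ (min αB αΩ)) :=
            mul_le_mul (hMb ζ₂ hζ₂) hπ12 (norm_nonneg _) hMnn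
    have h3 : ‖S₀c.comp (sphProj (Ω ζ₁) - sphProj (Ω ζ₂))‖
        ≤ ‖S₀c‖ * (max CΩ 0 * dist ζ₁ ζ₂ ^ (min αB αΩ)) := by
      calc ‖S₀c.comp (sphProj (Ω ζ₁) - sphProj (Ω ζ₂))‖
          ≤ ‖S₀c‖ * ‖sphProj (Ω ζ₁) - sphProj (Ω ζ₂)‖ := ContinuousLinearMap.opNorm_comp_le _ _
        _ ≤ ‖S₀c‖ * (max CΩ 0 * dist ζ₁ ζ₂ ^ (min αB αΩ)) :=
            mul_le_mul_of_nonneg_left hπ12 (norm_nonneg _)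
    calc ‖Btilde ζ₁ - Btilde ζ₂‖
        ≤ ‖(B ζ₁ - B ζ₂).comp (sphProj (Ω ζ₁))‖
            + ‖(B ζ₂).comp (sphProj (Ω ζ₁) - sphProj (Ω ζ₂))‖
            + ‖S₀c.comp (sphProj (Ω ζ₁) - sphProj (Ω ζ₂))‖ := by
          rw [hdecomp]
          exact norm_add₃_le
      _ ≤ (max CB 0 + (M + ‖S₀c‖) * max CΩ 0) * dist ζ₁ ζ₂ ^ (min αB αΩ) := by
          have := h1; have := h2; have := h3
          nlinarith [h1, h2, h3]
  · -- agreement on Ω ζ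
    intro ζ hζ v hv
    have hfix : sphProj (Ω ζ) v = v := by
      have : (Submodule.orthogonalProjectionOnto (Ω ζ) v : EuclideanSpace ℂ (Fin ℓ)) = v :=
        (Submodule.starProjection_eq_self_iff (K := Ω ζ)).mpr hv
      exact this
    have happ : Btilde ζ v = B ζ (sphProj (Ω ζ) v) + S₀c (sphProj (Ω ζ) v - v) := by
      conv_lhs => rw [hBt]
      simp only [ContinuousLinearMap.add_apply, ContinuousLinearMap.comp_apply,
        ContinuousLinearMap.sub_apply, ContinuousLinearMap.id_apply]
    rw [happ, hfix, sub_self, map_zero, add_zero]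
  · -- full cancellation
    intro v
    have hint2 : Integrable
        (fun ζ : Sp => S₀c (sphProj (Ω ζ) v - v) * ((aJ a (ζ : (EuclideanSpace ℝ (Fin d))) : ℝ) : ℂ)) ν :=
      sphere_integrable (((S₀c.continuous).comp
        ((hπc.clm_apply continuous_const).sub continuous_const)).mul hJc)
    have hsplit : (∫ ζ : Sp, Btilde (ζ : (EuclideanSpace ℝ (Fin d))) v * ((aJ a (ζ : (EuclideanSpace ℝ (Fin d))) : ℝ) : ℂ) ∂ν)
        = (∫ ζ : Sp, B (ζ : (EuclideanSpace ℝ (Fin d))) (sphProj (Ω ζ) v) * ((aJ a (ζ : (EuclideanSpace ℝ (Fin d))) : ℝ) : ℂ) ∂ν)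
          + ∫ ζ : Sp, S₀c (sphProj (Ω ζ) v - v) * ((aJ a (ζ : (EuclideanSpace ℝ (Fin d))) : ℝ) : ℂ) ∂ν := by
      rw [← integral_add (hTint v) hint2]
      refine integral_congr_ae (.of_forall fun ζ => ?_)
      beta_reduce
      have happ : Btilde (ζ : EuclideanSpace ℝ (Fin d)) v
          = B (ζ : EuclideanSpace ℝ (Fin d)) (sphProj (Ω ζ) v) + S₀c (sphProj (Ω ζ) v - v) := by
        conv_lhs => rw [hBt]
        simp only [ContinuousLinearMap.add_apply, ContinuousLinearMap.comp_apply,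
          ContinuousLinearMap.sub_apply, ContinuousLinearMap.id_apply]
      rw [happ, add_mul]
    have hsecond : (∫ ζ : Sp, S₀c (sphProj (Ω ζ) v - v) * ((aJ a (ζ : (EuclideanSpace ℝ (Fin d))) : ℝ) : ℂ) ∂ν)
        = - Tmap v := by
      have hrw : (fun ζ : Sp => S₀c (sphProj (Ω ζ) v - v) * ((aJ a (ζ : (EuclideanSpace ℝ (Fin d))) : ℝ) : ℂ))
          = fun ζ : Sp => S₀c (-(((aJ a (ζ : (EuclideanSpace ℝ (Fin d))) : ℝ) : ℂ) • (v - sphProj (Ω ζ) v))) := by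
        ext ζ
        simp only [map_neg, _root_.map_smul, map_sub, smul_eq_mul]
        ring
      rw [hrw]
      have hIneg : Integrable
          (fun ζ : Sp => -(((aJ a (ζ : (EuclideanSpace ℝ (Fin d))) : ℝ) : ℂ) • (v - sphProj (Ω ζ) v))) ν :=
        (hQint v).neg
      have : (∫ ζ : Sp, S₀c (-(((aJ a (ζ : (EuclideanSpace ℝ (Fin d))) : ℝ) : ℂ) • (v - sphProj (Ω ζ) v))) ∂ν)
          = S₀c (∫ ζ : Sp, -(((aJ a (ζ : (EuclideanSpace ℝ (Fin d))) : ℝ) : ℂ) • (v - sphProj (Ω ζ) v)) ∂ν) :=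
        S₀c.integral_comp_comm hIneg
      rw [this, integral_neg, map_neg]
      have hQv : (∫ ζ : Sp, ((aJ a (ζ : (EuclideanSpace ℝ (Fin d))) : ℝ) : ℂ) • (v - sphProj (Ω ζ) v) ∂ν) = Qmap v := rfl
      rw [hQv]
      have : S₀c (Qmap v) = Tmap v := by
        have := congr_arg (fun f => f v) hS₀
        simpa [hS₀c] using this
      rw [this]
    rw [hsplit, hsecond]
    have hfirst : (∫ ζ : Sp, B (ζ : (EuclideanSpace ℝ (Fin d))) (sphProj (Ω ζ) v) * ((aJ a (ζ : (EuclideanSpace ℝ (Fin d))) : ℝ) : ℂ) ∂ν)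
        = Tmap v := rfl
    rw [hfirst]
    ring
end

section
/- (Integration of truncated a-homogeneous functions.) Let Φ : ℝ^d∖{0} → ℂ be continuous and a-homogeneous of order m ∈ ℝ. Then for all 0 < ε < R, ∫_{{ξ : ε ≤ η(ξ) ≤ R}} Φ(ξ) dξ = (∫_ε^R r^{m+d−1} dr) · ∫_{S^{d−1}} J(ζ) Φ(ζ) dσ(ζ). In particular, for m = −d the first factor equals log(R/ε). -/
open MeasureTheory Metric intervalIntegral
open scoped ENNReal

/-- Anisotropic dilation `Dil_t(ξ) = (t^{-a_1} ξ_1, …, t^{-a_d} ξ_d)`. -/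
noncomputable def aDil {d : ℕ} (a : Fin d → ℝ) (t : ℝ) (ξ : EuclideanSpace ℝ (Fin d)) :
    EuclideanSpace ℝ (Fin d) :=
  WithLp.toLp 2 (fun j => t ^ (-(a j)) * ξ j)

noncomputable section

namespace Stmt8

variable {d : ℕ}

local notation "Es" => EuclideanSpace ℝ (Fin d)

/-! ### Basic quadratic form lemmas -/

def n2 (x : Es) : ℝ := ∑ i, x i ^ 2

lemma exists_ne_zero {x : Es} (hx : x ≠ 0) : ∃ j, x j ≠ 0 := by
  by_contra h
  push_neg at h
  exact hx (PiLp.ext fun i => by simp [h i])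

lemma n2_eq_norm_sq (x : Es) : n2 x = ‖x‖ ^ 2 := by
  rw [EuclideanSpace.norm_eq, Real.sq_sqrt (by exact Finset.sum_nonneg fun i _ => by positivity)]
  simp [n2, Real.norm_eq_abs, sq_abs]

lemma n2_nonneg (x : Es) : 0 ≤ n2 x := Finset.sum_nonneg fun _ _ => sq_nonneg _

lemma norm_pos {x : Es} (hx : x ≠ 0) : (0:ℝ) < ‖x‖ := norm_pos_iff.2 hx

lemma n2_pos {x : Es} (hx : x ≠ 0) : 0 < n2 x := by
  rw [n2_eq_norm_sq]
  have := norm_pos hx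
  positivity

lemma aJ_nonneg (a : Fin d → ℝ) (hapos : ∀ j, 0 < a j) (x : Es) : 0 ≤ aJ a x :=
  Finset.sum_nonneg fun j _ => mul_nonneg (hapos j).le (sq_nonneg _)

lemma aJ_smul (a : Fin d → ℝ) (t : ℝ) (ζ : Es) : aJ a (t • ζ) = t ^ 2 * aJ a ζ := by
  rw [aJ, aJ, Finset.mul_sum]
  refine Finset.sum_congr rfl fun j _ => ?_
  have : (t • ζ) j = t * ζ j := rfl
  rw [this]
  ring

/-- Uniqueness of the anisotropic "polar radius". -/
lemma eta_uniq (a : Fin d → ℝ) (hapos : ∀ j, 0 < a j) {ξ : Es} (hξ : ξ ≠ 0)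
    {t s : ℝ} (ht : 0 < t) (hs : 0 < s)
    (h1 : ∑ j, ξ j ^ 2 / t ^ (2 * a j) = 1)
    (h2 : ∑ j, ξ j ^ 2 / s ^ (2 * a j) = 1) : t = s := by
  have key : ∀ t s : ℝ, 0 < t → t < s →
      (∑ j, ξ j ^ 2 / s ^ (2 * a j)) < ∑ j, ξ j ^ 2 / t ^ (2 * a j) := by
    intro t s ht hts
    obtain ⟨j0, hj0⟩ := exists_ne_zero hξ
    refine Finset.sum_lt_sum (fun j _ => ?_) ⟨j0, Finset.mem_univ _, ?_⟩
    · refine div_le_div_of_nonneg_left (by positivity) (Real.rpow_pos_of_pos ht _) ?_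
      exact Real.rpow_le_rpow ht.le hts.le (by have := hapos j; positivity)
    · refine div_lt_div_of_pos_left (by positivity) (Real.rpow_pos_of_pos ht _) ?_
      exact Real.rpow_lt_rpow ht.le hts (by have := hapos j0; positivity)
  rcases lt_trichotomy t s with h | h | h
  · have := key t s ht h; rw [h1, h2] at this; exact absurd this (lt_irrefl _)
  · exact h
  · have := key s t hs h; rw [h1, h2] at this; exact absurd this (lt_irrefl _)

/-! ### The map `G` and its derivative -/

def Gmap (a : Fin d → ℝ) (x : Es) : Es := WithLp.toLp 2 (fun j => n2 x ^ ((a j - 1) / 2) * x j)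

def dn2 (x : Es) : Es →L[ℝ] ℝ := ∑ i, (2 * x i) • EuclideanSpace.proj i

lemma dn2_single (x : Es) (j : Fin d) : dn2 x (EuclideanSpace.single j 1) = 2 * x j := by
  simp [dn2, EuclideanSpace.single_apply, mul_ite]

lemma hasFDerivAt_n2 (x : Es) : HasFDerivAt n2 (dn2 x) x := by
  have h : ∀ i ∈ Finset.univ, HasFDerivAt (fun y : Es => y i ^ 2)
      ((2 * x i) • (EuclideanSpace.proj i : Es →L[ℝ] ℝ)) x := by
    intro i _
    have hproj : HasFDerivAt (fun y : Es => y i) (EuclideanSpace.proj i : Es →L[ℝ] ℝ) x :=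
      ContinuousLinearMap.hasFDerivAt (f := (EuclideanSpace.proj i : Es →L[ℝ] ℝ)) (x := x)
    have hsq := hproj.mul hproj
    have heq : (fun y : Es => y i ^ 2) = fun y : Es => y i * y i := funext fun y => pow_two _
    rw [heq, two_mul, add_smul]
    exact hsq
  exact HasFDerivAt.fun_sum h

def GderC (a : Fin d → ℝ) (x : Es) (j : Fin d) : Es →L[ℝ] ℝ :=
  (n2 x ^ ((a j - 1) / 2)) • EuclideanSpace.proj j +
    x j • (((a j - 1) / 2 * n2 x ^ ((a j - 1) / 2 - 1)) • dn2 x)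

def Gder (a : Fin d → ℝ) (x : Es) : Es →L[ℝ] Es :=
  (((PiLp.continuousLinearEquiv 2 ℝ (fun _ : Fin d => ℝ)).symm : (Fin d → ℝ) →L[ℝ] Es)).comp
    (ContinuousLinearMap.pi (GderC a x))

lemma hasFDerivAt_Gmap (a : Fin d → ℝ) {x : Es} (hx : x ≠ 0) :
    HasFDerivAt (Gmap a) (Gder a x) x := by
  have hcoord : ∀ j, HasFDerivAt (fun y : Es => n2 y ^ ((a j - 1) / 2) * y j) (GderC a x j) x := by
    intro j
    have h1 : HasFDerivAt (fun y : Es => n2 y ^ ((a j - 1) / 2))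
        (((a j - 1) / 2 * n2 x ^ ((a j - 1) / 2 - 1)) • dn2 x) x :=
      (hasFDerivAt_n2 x).rpow_const (Or.inl (n2_pos hx).ne')
    have hproj : HasFDerivAt (fun y : Es => y j) (EuclideanSpace.proj j : Es →L[ℝ] ℝ) x :=
      ContinuousLinearMap.hasFDerivAt (f := (EuclideanSpace.proj j : Es →L[ℝ] ℝ)) (x := x)
    exact h1.mul hproj
  have hp : HasFDerivAt (fun y : Es => (fun j => n2 y ^ ((a j - 1) / 2) * y j : Fin d → ℝ))
      (ContinuousLinearMap.pi (GderC a x)) x := hasFDerivAt_pi.2 hcoord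
  exact (PiLp.continuousLinearEquiv 2 ℝ (fun _ : Fin d => ℝ)).symm.comp_hasFDerivAt_iff.2 hp

/-! ### The determinant -/

lemma rpow_finset_sum (c : ℝ) (hc : 0 < c) (s : Finset (Fin d)) (f : Fin d → ℝ) :
    ∏ j ∈ s, c ^ f j = c ^ (∑ j ∈ s, f j) := by
  induction s using Finset.induction with
  | empty => simp
  | insert _ _ hnm ih => rename_i i s'
                         rw [Finset.prod_insert hnm, Finset.sum_insert hnm, ih, ← Real.rpow_add hc]

lemma Gder_det (a : Fin d → ℝ) (hasum : ∑ j, a j = d) {x : Es} (hx : x ≠ 0) :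
    (Gder a x).det = aJ a x / n2 x := by
  classical
  have hn : (0:ℝ) < n2 x := n2_pos hx
  set b := (EuclideanSpace.basisFun (Fin d) ℝ).toBasis with hb
  rw [ContinuousLinearMap.det, ← LinearMap.det_toMatrix b]
  have hM : (LinearMap.toMatrix b b (Gder a x : Es →ₗ[ℝ] Es)) =
      Matrix.diagonal (fun j => n2 x ^ ((a j - 1) / 2)) *
        (1 + Matrix.replicateCol Unit (fun k => (a k - 1) * x k / n2 x) *
          Matrix.replicateRow Unit (fun j => x j)) := by
    ext k j
    rw [LinearMap.toMatrix_apply]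
    have hbj : (b j : Es) = EuclideanSpace.single j 1 := by
      rw [hb, OrthonormalBasis.coe_toBasis, EuclideanSpace.basisFun_apply]
    have hrepr : ∀ y : Es, b.repr y k = y k := fun y => by
      rw [hb, OrthonormalBasis.coe_toBasis_repr_apply, EuclideanSpace.basisFun_repr]
    rw [hbj, hrepr]
    have hL : (Gder a x : Es →ₗ[ℝ] Es) (EuclideanSpace.single j 1) k
        = GderC a x k (EuclideanSpace.single j 1) := rfl
    rw [hL]
    have h1 : n2 x ^ ((a k - 1) / 2 - 1) = n2 x ^ ((a k - 1) / 2) / n2 x := by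
      rw [Real.rpow_sub hn, Real.rpow_one]
    rw [Matrix.diagonal_mul]
    simp only [GderC, ContinuousLinearMap.add_apply, ContinuousLinearMap.smul_apply,
      PiLp.proj_apply, dn2_single, EuclideanSpace.single_apply, smul_eq_mul,
      Matrix.add_apply, Matrix.one_apply, Matrix.mul_apply, Matrix.replicateCol_apply,
      Matrix.replicateRow_apply, Finset.univ_unique, Finset.sum_singleton]
    rcases eq_or_ne k j with rfl | hkj
    · simp only [if_pos rfl, h1]
      field_simp
    · simp only [if_neg (Ne.symm hkj), if_neg hkj, h1]
      field_simp
  rw [hM, Matrix.det_mul, Matrix.det_one_add_replicateCol_mul_replicateRow, Matrix.det_diagonal]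
  rw [rpow_finset_sum _ hn]
  have hsum0 : (∑ j, (a j - 1) / 2 : ℝ) = 0 := by
    rw [← Finset.sum_div, Finset.sum_sub_distrib, hasum]
    simp
  rw [hsum0, Real.rpow_zero, one_mul]
  have hdot : dotProduct (fun j => x j) (fun k => (a k - 1) * x k / n2 x)
      = (∑ j, (a j - 1) * x j ^ 2) / n2 x := by
    unfold dotProduct
    rw [Finset.sum_div]
    exact Finset.sum_congr rfl fun j _ => by ring
  rw [hdot]
  have hsub : (∑ j, (a j - 1) * x j ^ 2) = aJ a x - n2 x := by
    rw [aJ, n2, ← Finset.sum_sub_distrib]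
    exact Finset.sum_congr rfl fun j _ => by ring
  rw [hsub]
  field_simp
  ring

/-! ### Algebraic properties of `G` -/

lemma Gmap_apply' (a : Fin d → ℝ) (x : Es) (j : Fin d) :
    Gmap a x j = ‖x‖ ^ (a j - 1) * x j := by
  have h : n2 x ^ ((a j - 1) / 2) = ‖x‖ ^ (a j - 1) := by
    rw [n2_eq_norm_sq, ← Real.rpow_natCast ‖x‖ 2, ← Real.rpow_mul (norm_nonneg x)]
    congr 1
    push_cast
    ring
  rw [Gmap, PiLp.toLp_apply, h]

lemma rpow_sq_div (t : ℝ) (ht : 0 < t) (c : ℝ) (v : ℝ) :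
    (t ^ (c - 1) * v) ^ 2 / t ^ (2 * c) = v ^ 2 / t ^ 2 := by
  rw [mul_pow, ← Real.rpow_natCast (t ^ (c - 1)) 2, ← Real.rpow_mul ht.le]
  rw [div_eq_div_iff (by positivity) (by positivity), ← Real.rpow_natCast t 2]
  rw [show t ^ ((c - 1) * ((2:ℕ):ℝ)) * v ^ 2 * t ^ ((2:ℕ):ℝ)
      = v ^ 2 * (t ^ ((c - 1) * ((2:ℕ):ℝ)) * t ^ ((2:ℕ):ℝ)) by ring, ← Real.rpow_add ht]
  congr 1
  push_cast
  ring

lemma sum_Gmap (a : Fin d → ℝ) {x : Es} (hx : x ≠ 0) :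
    ∑ j, (Gmap a x j) ^ 2 / ‖x‖ ^ (2 * a j) = 1 := by
  have ht : (0:ℝ) < ‖x‖ := norm_pos hx
  have h : ∀ j, (Gmap a x j) ^ 2 / ‖x‖ ^ (2 * a j) = x j ^ 2 / ‖x‖ ^ 2 := fun j => by
    rw [Gmap_apply', rpow_sq_div _ ht]
  rw [Finset.sum_congr rfl fun j _ => h j, ← Finset.sum_div]
  rw [show (∑ j, x j ^ 2) = n2 x from rfl, n2_eq_norm_sq]
  exact div_self (by positivity)

lemma Gmap_ne_zero (a : Fin d → ℝ) {x : Es} (hx : x ≠ 0) : Gmap a x ≠ 0 := by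
  obtain ⟨j, hj⟩ := exists_ne_zero hx
  intro h
  have ht : (0:ℝ) < ‖x‖ := norm_pos hx
  have h0 : Gmap a x j = 0 := by rw [h]; rfl
  rw [Gmap_apply'] at h0
  have hpow : (0:ℝ) < ‖x‖ ^ (a j - 1) := Real.rpow_pos_of_pos ht _
  exact hj ((mul_eq_zero.1 h0).resolve_left hpow.ne')

lemma Gmap_smul (a : Fin d → ℝ) {r : ℝ} (hr : 0 < r) {ζ : Es} (hζ : ‖ζ‖ = 1) :
    Gmap a (r • ζ) = aDil a r⁻¹ ζ := by
  ext j
  have hnorm : ‖r • ζ‖ = r := by rw [norm_smul, hζ, Real.norm_eq_abs, abs_of_pos hr, mul_one]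
  have hsmul : (r • ζ) j = r * ζ j := rfl
  rw [Gmap_apply', hnorm, hsmul, aDil, PiLp.toLp_apply]
  show r ^ (a j - 1) * (r * ζ j) = r⁻¹ ^ (-a j) * ζ j
  rw [Real.inv_rpow hr.le, Real.rpow_neg hr.le, inv_inv, Real.rpow_sub hr, Real.rpow_one]
  field_simp

lemma Gmap_injOn (a : Fin d → ℝ) (hapos : ∀ j, 0 < a j) :
    Set.InjOn (Gmap a) {x : Es | x ≠ 0} := by
  intro x hx y hy hxy
  have hx0 : x ≠ 0 := hx
  have hy0 : y ≠ 0 := hy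
  have hGx0 : Gmap a x ≠ 0 := Gmap_ne_zero a hx0
  have h1 := sum_Gmap a hx0
  have h2 := sum_Gmap a hy0
  rw [← hxy] at h2
  have hnorm : ‖x‖ = ‖y‖ := eta_uniq a hapos hGx0 (norm_pos hx0) (norm_pos hy0) h1 h2
  ext j
  have hj : Gmap a x j = Gmap a y j := by rw [hxy]
  rw [Gmap_apply', Gmap_apply', hnorm] at hj
  exact mul_left_cancel₀ (Real.rpow_pos_of_pos (norm_pos hy0) _).ne' hj

/-- Inverse of `G`. -/
def Hmap (a : Fin d → ℝ) (t : ℝ) (ξ : Es) : Es := WithLp.toLp 2 (fun j => t ^ (1 - a j) * ξ j)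

lemma norm_Hmap (a : Fin d → ℝ) {t : ℝ} (ht : 0 < t) {ξ : Es}
    (h1 : ∑ j, ξ j ^ 2 / t ^ (2 * a j) = 1) : ‖Hmap a t ξ‖ = t := by
  have hsq : n2 (Hmap a t ξ) = t ^ 2 := by
    rw [n2]
    have h : ∀ j, (Hmap a t ξ) j ^ 2 = t ^ 2 * (ξ j ^ 2 / t ^ (2 * a j)) := fun j => by
      have hE : t ^ ((1 - a j) * ((2:ℕ):ℝ)) = t ^ (2:ℕ) / t ^ (2 * a j) := by
        rw [← Real.rpow_natCast t 2, ← Real.rpow_sub ht]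
        congr 1
        push_cast
        ring
      rw [Hmap, PiLp.toLp_apply, mul_pow, ← Real.rpow_natCast (t ^ (1 - a j)) 2, ← Real.rpow_mul ht.le, hE]
      ring
    rw [Finset.sum_congr rfl fun j _ => h j, ← Finset.mul_sum, h1, mul_one]
  have h := n2_eq_norm_sq (Hmap a t ξ)
  rw [hsq] at h
  rw [← Real.sqrt_sq (norm_nonneg _), ← h, Real.sqrt_sq ht.le]

lemma Gmap_Hmap (a : Fin d → ℝ) {t : ℝ} (ht : 0 < t) {ξ : Es}
    (h1 : ∑ j, ξ j ^ 2 / t ^ (2 * a j) = 1) : Gmap a (Hmap a t ξ) = ξ := by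
  ext j
  rw [Gmap_apply', norm_Hmap a ht h1, Hmap, PiLp.toLp_apply, ← mul_assoc, ← Real.rpow_add ht]
  norm_num

/-! ### The radial integral -/

lemma radial {d' : ℕ} (hd' : 1 ≤ d') (m : ℝ) {ε R : ℝ} (hε : 0 < ε) (hεR : ε < R) :
    (∫ r : Set.Ioi (0:ℝ), Set.indicator (Set.Icc ε R) (fun t => ((t ^ m : ℝ) : ℂ)) (r:ℝ)
      ∂(Measure.volumeIoiPow (d' - 1)))
    = ((∫ r in ε..R, r ^ (m + d' - 1) : ℝ) : ℂ) := by
  rw [Measure.volumeIoiPow]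
  simp only [ENNReal.ofReal]
  rw [integral_withDensity_eq_integral_smul ((measurable_subtype_coe.pow_const _).real_toNNReal)]
  rw [integral_subtype_comap measurableSet_Ioi
    (fun s : ℝ => Real.toNNReal (s ^ (d' - 1)) •
      Set.indicator (Set.Icc ε R) (fun t => ((t ^ m : ℝ) : ℂ)) s)]
  rw [setIntegral_congr_fun measurableSet_Ioi
    (g := Set.indicator (Set.Icc ε R) (fun t => ((t ^ (m + d' - 1) : ℝ) : ℂ)))
    (fun s hs => ?_)]
  · rw [setIntegral_indicator measurableSet_Icc]
    have hint : Set.Ioi (0:ℝ) ∩ Set.Icc ε R = Set.Icc ε R :=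
      Set.inter_eq_self_of_subset_right (fun r hr => lt_of_lt_of_le hε hr.1)
    rw [hint]
    have hreal : (∫ r in Set.Icc ε R, r ^ (m + d' - 1)) = ∫ r in ε..R, r ^ (m + d' - 1) := by
      rw [integral_Icc_eq_integral_Ioc, ← intervalIntegral.integral_of_le hεR.le]
    rw [← hreal]
    exact _root_.integral_ofReal
  · have hs0 : (0:ℝ) < s := hs
    by_cases hic : s ∈ Set.Icc ε R
    · rw [Set.indicator_of_mem hic, Set.indicator_of_mem hic]
      rw [NNReal.smul_def, Real.coe_toNNReal _ (pow_nonneg hs0.le _), Complex.real_smul,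
        ← Complex.ofReal_mul]
      congr 1
      rw [← Real.rpow_natCast s (d' - 1), ← Real.rpow_add hs0]
      congr 1
      push_cast [Nat.cast_sub hd']
      ring
    · rw [Set.indicator_of_notMem hic, Set.indicator_of_notMem hic, smul_zero]

end Stmt8

end

/-- (Integration of truncated `a`-homogeneous functions.) If `Φ` is continuous
away from the origin and `a`-homogeneous of order `m`, then for `0 < ε < R`,
`∫_{ε ≤ η(ξ) ≤ R} Φ(ξ) dξ = (∫_ε^R r^{m+d-1} dr) ⬝ ∫_{S^{d-1}} J(ζ) Φ(ζ) dσ(ζ)`;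
for `m = -d` the first factor equals `log (R/ε)`. -/
theorem statement8 (d : ℕ) (hd : 2 ≤ d)
    (a : Fin d → ℝ) (hapos : ∀ j, 0 < a j) (hasum : ∑ j, a j = d)
    (η : EuclideanSpace ℝ (Fin d) → ℝ)
    (hη : ∀ ξ : EuclideanSpace ℝ (Fin d), ξ ≠ 0 →
      0 < η ξ ∧ ∑ j, (ξ j) ^ 2 / (η ξ) ^ (2 * a j) = 1)
    (m : ℝ) (Φ : EuclideanSpace ℝ (Fin d) → ℂ)
    (hcont : ContinuousOn Φ {ξ : EuclideanSpace ℝ (Fin d) | ξ ≠ 0})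
    (hhom : ∀ t : ℝ, 0 < t → ∀ ξ : EuclideanSpace ℝ (Fin d), ξ ≠ 0 →
      Φ (aDil a t ξ) = ((t ^ (-m) : ℝ) : ℂ) * Φ ξ)
    (ε R : ℝ) (hε : 0 < ε) (hεR : ε < R) :
    (∫ ξ in {ξ : EuclideanSpace ℝ (Fin d) | ξ ≠ 0 ∧ ε ≤ η ξ ∧ η ξ ≤ R}, Φ ξ)
      = (((∫ r in ε..R, r ^ (m + d - 1) : ℝ) : ℝ) : ℂ) *
        ∫ ζ : sphere (0 : EuclideanSpace ℝ (Fin d)) 1,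
          ((aJ a (ζ : EuclideanSpace ℝ (Fin d)) : ℝ) : ℂ) * Φ (ζ : EuclideanSpace ℝ (Fin d))
          ∂(volume : Measure (EuclideanSpace ℝ (Fin d))).toSphere
    ∧ (m = -(d : ℝ) → (∫ r in ε..R, r ^ (m + d - 1) : ℝ) = Real.log (R / ε)) := by
  classical
  refine ⟨?_, fun hm => ?_⟩
  · -- main identity
    set A : Set (EuclideanSpace ℝ (Fin d)) := (fun x => ‖x‖) ⁻¹' (Set.Icc ε R) with hA
    have hAmeas : MeasurableSet A := measurableSet_Icc.preimage continuous_norm.measurable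
    have hA0 : ∀ x ∈ A, x ≠ 0 := by
      intro x hx h0
      rw [h0] at hx
      have hx' : ‖(0 : EuclideanSpace ℝ (Fin d))‖ ∈ Set.Icc ε R := hx
      rw [norm_zero] at hx'
      exact absurd hx'.1 (not_le.2 hε)
    -- image identity
    have himg : {ξ : EuclideanSpace ℝ (Fin d) | ξ ≠ 0 ∧ ε ≤ η ξ ∧ η ξ ≤ R}
        = Stmt8.Gmap a '' A := by
      ext ξ
      constructor
      · rintro ⟨hξ0, h1, h2⟩
        have hηpos := (hη ξ hξ0).1
        have hsum := (hη ξ hξ0).2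
        refine ⟨Stmt8.Hmap a (η ξ) ξ, ?_, Stmt8.Gmap_Hmap a hηpos hsum⟩
        have hno : ‖Stmt8.Hmap a (η ξ) ξ‖ = η ξ := Stmt8.norm_Hmap a hηpos hsum
        show ‖Stmt8.Hmap a (η ξ) ξ‖ ∈ Set.Icc ε R
        rw [hno]
        exact ⟨h1, h2⟩
      · rintro ⟨x, hxA, rfl⟩
        have hx0 : x ≠ 0 := hA0 x hxA
        have hG0 : Stmt8.Gmap a x ≠ 0 := Stmt8.Gmap_ne_zero a hx0
        have hηG : η (Stmt8.Gmap a x) = ‖x‖ :=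
          Stmt8.eta_uniq a hapos hG0 (hη _ hG0).1 (Stmt8.norm_pos hx0) (hη _ hG0).2
            (Stmt8.sum_Gmap a hx0)
        have hxIcc : ‖x‖ ∈ Set.Icc ε R := hxA
        exact ⟨hG0, by rw [hηG]; exact hxIcc.1, by rw [hηG]; exact hxIcc.2⟩
    have hinj : Set.InjOn (Stmt8.Gmap a) A :=
      (Stmt8.Gmap_injOn a hapos).mono (fun x hx => hA0 x hx)
    have hderiv : ∀ x ∈ A, HasFDerivWithinAt (Stmt8.Gmap a) (Stmt8.Gder a x) A x :=
      fun x hx => (Stmt8.hasFDerivAt_Gmap a (hA0 x hx)).hasFDerivWithinAt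
    rw [himg, integral_image_eq_integral_abs_det_fderiv_smul volume hAmeas hderiv hinj Φ]
    -- replace the integrand
    set k : EuclideanSpace ℝ (Fin d) → ℂ :=
      fun x => ((aJ a x / Stmt8.n2 x : ℝ) : ℂ) * Φ (Stmt8.Gmap a x) with hk
    rw [setIntegral_congr_fun hAmeas (g := k) (fun x hx => by
      rw [Stmt8.Gder_det a hasum (hA0 x hx),
        abs_of_nonneg (div_nonneg (Stmt8.aJ_nonneg a hapos x) (Stmt8.n2_pos (hA0 x hx)).le),
        hk, Complex.real_smul])]
    -- pass to the polar decomposition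
    have hsub : A ⊆ ({(0 : EuclideanSpace ℝ (Fin d))}ᶜ : Set _) := fun x hx => hA0 x hx
    have e2 : (∫ x in ({(0 : EuclideanSpace ℝ (Fin d))}ᶜ : Set _), A.indicator k x)
        = ∫ x in A, k x := by
      rw [setIntegral_indicator hAmeas, Set.inter_eq_self_of_subset_right hsub]
    rw [← e2]
    have hcoe : ∀ x : ({(0 : EuclideanSpace ℝ (Fin d))}ᶜ : Set _),
        ((homeomorphUnitSphereProd (EuclideanSpace ℝ (Fin d)) x).2 : ℝ) •
          ((homeomorphUnitSphereProd (EuclideanSpace ℝ (Fin d)) x).1 : EuclideanSpace ℝ (Fin d))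
          = (x : EuclideanSpace ℝ (Fin d)) := fun x => by
      rw [← homeomorphUnitSphereProd_symm_apply_coe, Homeomorph.symm_apply_apply]
    have e3 : (∫ x in ({(0 : EuclideanSpace ℝ (Fin d))}ᶜ : Set _), A.indicator k x)
        = ∫ p : sphere (0 : EuclideanSpace ℝ (Fin d)) 1 × Set.Ioi (0:ℝ),
            A.indicator k ((p.2 : ℝ) • (p.1 : EuclideanSpace ℝ (Fin d)))
            ∂((volume : Measure (EuclideanSpace ℝ (Fin d))).toSphere.prod
              (Measure.volumeIoiPow (Module.finrank ℝ (EuclideanSpace ℝ (Fin d)) - 1))) := by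
      rw [← integral_subtype_comap (measurableSet_singleton
        (0 : EuclideanSpace ℝ (Fin d))).compl (fun x => A.indicator k x)]
      rw [← MeasurePreserving.integral_comp
        (Measure.measurePreserving_homeomorphUnitSphereProd volume)
        (Homeomorph.measurableEmbedding _)
        (fun p : sphere (0 : EuclideanSpace ℝ (Fin d)) 1 × Set.Ioi (0:ℝ) =>
          A.indicator k ((p.2 : ℝ) • (p.1 : EuclideanSpace ℝ (Fin d))))]
      refine integral_congr_ae (Filter.Eventually.of_forall fun x => ?_)
      simp only
      rw [hcoe x]
    rw [e3]
    -- pointwise factorization on the sphere × ray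
    have e4 : ∀ p : sphere (0 : EuclideanSpace ℝ (Fin d)) 1 × Set.Ioi (0:ℝ),
        A.indicator k ((p.2 : ℝ) • (p.1 : EuclideanSpace ℝ (Fin d)))
        = (((aJ a (p.1 : EuclideanSpace ℝ (Fin d)) : ℝ) : ℂ) *
            Φ (p.1 : EuclideanSpace ℝ (Fin d))) *
          (Set.indicator (Set.Icc ε R) (fun t => ((t ^ m : ℝ) : ℂ)) (p.2 : ℝ)) := by
      rintro ⟨ζ, r⟩
      have ht : (0:ℝ) < (r:ℝ) := r.2
      have hζn : ‖(ζ : EuclideanSpace ℝ (Fin d))‖ = 1 := mem_sphere_zero_iff_norm.1 ζ.2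
      have hζ0 : (ζ : EuclideanSpace ℝ (Fin d)) ≠ 0 := by
        intro h
        rw [h, norm_zero] at hζn
        exact one_ne_zero hζn.symm
      have hnorm : ‖(r:ℝ) • (ζ : EuclideanSpace ℝ (Fin d))‖ = (r:ℝ) := by
        rw [norm_smul, hζn, Real.norm_eq_abs, abs_of_pos ht, mul_one]
      have hmem : ((r:ℝ) • (ζ : EuclideanSpace ℝ (Fin d)) ∈ A) ↔ (r:ℝ) ∈ Set.Icc ε R := by
        show (‖(r:ℝ) • (ζ : EuclideanSpace ℝ (Fin d))‖ ∈ Set.Icc ε R) ↔ _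
        rw [hnorm]
      by_cases hic : (r:ℝ) ∈ Set.Icc ε R
      · rw [Set.indicator_of_mem (hmem.2 hic), Set.indicator_of_mem hic]
        have hn2 : Stmt8.n2 ((r:ℝ) • (ζ : EuclideanSpace ℝ (Fin d))) = (r:ℝ) ^ 2 := by
          rw [Stmt8.n2_eq_norm_sq, hnorm]
        have haJ : aJ a ((r:ℝ) • (ζ : EuclideanSpace ℝ (Fin d)))
            = (r:ℝ) ^ 2 * aJ a (ζ : EuclideanSpace ℝ (Fin d)) := Stmt8.aJ_smul a _ _
        have hΦ : Φ (Stmt8.Gmap a ((r:ℝ) • (ζ : EuclideanSpace ℝ (Fin d))))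
            = (((r:ℝ) ^ m : ℝ) : ℂ) * Φ (ζ : EuclideanSpace ℝ (Fin d)) := by
          rw [Stmt8.Gmap_smul a ht hζn, hhom _ (inv_pos.2 ht) _ hζ0]
          congr 2
          rw [Real.inv_rpow ht.le, Real.rpow_neg ht.le, inv_inv]
        rw [hk]
        simp only
        rw [hn2, haJ, hΦ, show ((r:ℝ) ^ 2 * aJ a (ζ : EuclideanSpace ℝ (Fin d)) / (r:ℝ) ^ 2)
          = aJ a (ζ : EuclideanSpace ℝ (Fin d)) from by field_simp]
        push_cast
        ring
      · rw [Set.indicator_of_notMem (fun hmm => hic (hmem.1 hmm)),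
          Set.indicator_of_notMem hic, mul_zero]
    rw [integral_congr_ae (Filter.Eventually.of_forall e4)]
    rw [MeasureTheory.integral_prod_mul
      (μ := (volume : Measure (EuclideanSpace ℝ (Fin d))).toSphere)
      (ν := Measure.volumeIoiPow (Module.finrank ℝ (EuclideanSpace ℝ (Fin d)) - 1))
      (fun ζ : sphere (0 : EuclideanSpace ℝ (Fin d)) 1 =>
        ((aJ a (ζ : EuclideanSpace ℝ (Fin d)) : ℝ) : ℂ) * Φ (ζ : EuclideanSpace ℝ (Fin d)))
      (fun r : Set.Ioi (0:ℝ) =>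
        Set.indicator (Set.Icc ε R) (fun t => ((t ^ m : ℝ) : ℂ)) (r:ℝ))]
    rw [finrank_euclideanSpace_fin, Stmt8.radial (le_trans one_le_two hd) m hε hεR]
    ring
  · -- the logarithmic case
    have h1 : Set.EqOn (fun r : ℝ => r ^ (m + d - 1)) (fun r : ℝ => r⁻¹) (Set.uIcc ε R) := by
      intro r hr
      rw [Set.uIcc_of_le hεR.le] at hr
      simp only
      rw [hm, show -(d:ℝ) + d - 1 = -1 by ring, Real.rpow_neg_one]
    rw [intervalIntegral.integral_congr h1, integral_inv_of_pos hε (hε.trans hεR)]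
end
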